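/- Let C be a balanced category with pullbacks, and let e : X → Y be an epimorphism whose kernel pair p₁, p₂ : K ⇉ X exists and admits a coequalizer e' : X → Y' that is stable under pullback. Then the induced morphism e'' : Y' → Y with e'' ∘ e' = e is an isomorphism; consequently e is an effective (regular) epimorphism: e exhibits Y as a coequalizer of its kernel pair (p₁, p₂). -/

import Mathlib

open CategoryTheory CategoryTheory.Limits

/-- In a balanced category with pullbacks, let `e : X ⟶ Y` be an
epimorphism whose kernel pair `p₁, p₂ : pullback e e ⇉ X` admits a pullback-stable
coequalizer `e' : X ⟶ Y'`.  Then the induced morphism `e'' : Y' ⟶ Y` with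
`e' ≫ e'' = e` is an isomorphism; consequently `e` is an effective (regular)
epimorphism: `e` exhibits `Y` as a coequalizer of its kernel pair. -/
theorem effective_epi_of_balanced_stable_coequalizer {C : Type*} [Category C]
    [Balanced C] [HasPullbacks C]
    {X Y Y' : C} (e : X ⟶ Y) [Epi e] (e' : X ⟶ Y')
    (w : pullback.fst e e ≫ e' = pullback.snd e e ≫ e')
    (hcoeq : Nonempty (IsColimit (Cofork.ofπ e' w)))
    (hstable : ∀ {Z : C} (g : Z ⟶ Y')
      (p₁' p₂' : pullback (pullback.fst e e ≫ e') g ⟶ pullback e' g),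
      p₁' ≫ pullback.fst e' g =
        pullback.fst (pullback.fst e e ≫ e') g ≫ pullback.fst e e →
      p₁' ≫ pullback.snd e' g = pullback.snd (pullback.fst e e ≫ e') g →
      p₂' ≫ pullback.fst e' g =
        pullback.fst (pullback.fst e e ≫ e') g ≫ pullback.snd e e →
      p₂' ≫ pullback.snd e' g = pullback.snd (pullback.fst e e ≫ e') g →
      ∀ (w' : p₁' ≫ pullback.snd e' g = p₂' ≫ pullback.snd e' g),
        Nonempty (IsColimit (Cofork.ofπ (pullback.snd e' g) w')))
    (e'' : Y' ⟶ Y) (he'' : e' ≫ e'' = e) :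
    IsIso e'' ∧
      Nonempty (IsColimit (Cofork.ofπ e (pullback.condition (f := e) (g := e)))) := by
  -- For any `g : Z ⟶ Y'`, the pullback of `e'` along `g` is epi (it is a coequalizer).
  have epi_snd : ∀ {Z : C} (g : Z ⟶ Y'), Epi (pullback.snd e' g) := by
    intro Z g
    have h₁ : (pullback.fst (pullback.fst e e ≫ e') g ≫ pullback.fst e e) ≫ e' =
        pullback.snd (pullback.fst e e ≫ e') g ≫ g := by
      rw [Category.assoc, ← pullback.condition]
    have h₂ : (pullback.fst (pullback.fst e e ≫ e') g ≫ pullback.snd e e) ≫ e' =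
        pullback.snd (pullback.fst e e ≫ e') g ≫ g := by
      rw [Category.assoc, ← w, ← Category.assoc]; exact h₁
    obtain ⟨hc⟩ := hstable g (pullback.lift _ _ h₁) (pullback.lift _ _ h₂)
      (pullback.lift_fst _ _ _) (pullback.lift_snd _ _ _)
      (pullback.lift_fst _ _ _) (pullback.lift_snd _ _ _)
      (by rw [pullback.lift_snd, pullback.lift_snd])
    exact ⟨fun u v h => Cofork.IsColimit.hom_ext hc (by simpa using h)⟩
  -- `e''` is mono.
  have hmono : Mono e'' := by
    constructor
    intro Z a b hab
    have hea : Epi (pullback.snd e' a) := epi_snd a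
    have heb : Epi (pullback.snd e' (pullback.snd e' a ≫ b)) :=
      epi_snd (pullback.snd e' a ≫ b)
    set fa := pullback.fst e' a with hfa
    set ha := pullback.snd e' a with hha
    set fb := pullback.fst e' (ha ≫ b) with hfb
    set hb := pullback.snd e' (ha ≫ b) with hhb
    have hca : fa ≫ e' = ha ≫ a := pullback.condition
    have hcb : fb ≫ e' = hb ≫ (ha ≫ b) := pullback.condition
    have hue : (hb ≫ fa) ≫ e = fb ≫ e := by
      rw [← he'']
      calc (hb ≫ fa) ≫ e' ≫ e'' = hb ≫ (fa ≫ e') ≫ e'' := by simp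
        _ = hb ≫ (ha ≫ a) ≫ e'' := by rw [hca]
        _ = hb ≫ (ha ≫ b) ≫ e'' := by simp only [Category.assoc, hab]
        _ = (fb ≫ e') ≫ e'' := by rw [hcb]; simp
        _ = fb ≫ e' ≫ e'' := by simp
    -- factor through the kernel pair of `e`
    have hue' : (hb ≫ fa) ≫ e' = fb ≫ e' := by
      have := pullback.lift (hb ≫ fa) fb hue ≫= w
      rw [pullback.lift_fst_assoc, pullback.lift_snd_assoc] at this
      simpa using this
    have key : (hb ≫ ha) ≫ a = (hb ≫ ha) ≫ b := by
      calc (hb ≫ ha) ≫ a = hb ≫ (fa ≫ e') := by rw [hca]; simp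
        _ = (hb ≫ fa) ≫ e' := by simp
        _ = fb ≫ e' := hue'
        _ = hb ≫ (ha ≫ b) := hcb
        _ = (hb ≫ ha) ≫ b := by simp
    have : Epi (hb ≫ ha) := epi_comp _ _
    exact (cancel_epi (hb ≫ ha)).1 key
  have hepi : Epi e'' := by
    have : Epi (e' ≫ e'') := by rw [he'']; infer_instance
    exact epi_of_epi e' e''
  have hiso : IsIso e'' := isIso_of_mono_of_epi e''
  refine ⟨hiso, ?_⟩
  obtain ⟨hc⟩ := hcoeq
  exact ⟨IsColimit.ofIsoColimit hc (Cofork.ext (asIso e'') (by simpa using he''))⟩
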